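/- For every positive integer n and every real x with 2 ≤ x < n, f_n(x) = −1, where f_n(x) = ∑_{k=1}^n μ(k)·ν(x/k). -/

import Mathlib

open ArithmeticFunction

noncomputable def nu (x : ℝ) : ℝ := 2 * Int.fract (x / 2) - Int.fract x

noncomputable def fn (n : ℕ) (x : ℝ) : ℝ :=
  ∑ k ∈ Finset.Icc 1 n, (moebius k : ℝ) * nu (x / k)

lemma key_moebius_div (n m : ℕ) (h1 : 1 ≤ m) (h2 : m ≤ n) :
    ∑ k ∈ Finset.Icc 1 n, (moebius k : ℤ) * (m / k : ℕ) = 1 := by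
  have hcard : ∀ k : ℕ, ((m / k : ℕ) : ℤ)
      = (((Finset.Ioc 0 m).filter (k ∣ ·)).card : ℤ) := by
    intro k
    rw [Nat.Ioc_filter_dvd_card_eq_div m k]
  calc ∑ k ∈ Finset.Icc 1 n, (moebius k : ℤ) * (m / k : ℕ)
      = ∑ k ∈ Finset.Icc 1 n, ∑ j ∈ Finset.Ioc 0 m,
          (if k ∣ j then (moebius k : ℤ) else 0) := by
        refine Finset.sum_congr rfl fun k _ => ?_
        rw [← Finset.sum_filter, Finset.sum_const, hcard k]
        simp [mul_comm]
    _ = ∑ j ∈ Finset.Ioc 0 m, ∑ k ∈ Finset.Icc 1 n,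
          (if k ∣ j then (moebius k : ℤ) else 0) := Finset.sum_comm
    _ = ∑ j ∈ Finset.Ioc 0 m, ∑ k ∈ j.divisors, (moebius k : ℤ) := by
        refine Finset.sum_congr rfl fun j hj => ?_
        rw [Finset.mem_Ioc] at hj
        rw [← Finset.sum_filter]
        refine Finset.sum_congr ?_ fun _ _ => rfl
        ext k
        simp only [Finset.mem_filter, Finset.mem_Icc, Nat.mem_divisors]
        constructor
        · rintro ⟨⟨hk1, _⟩, hkj⟩
          exact ⟨hkj, by omega⟩
        · rintro ⟨hkj, hj0⟩
          have hkpos : 0 < k := Nat.pos_of_dvd_of_pos hkj hj.1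
          have hkle : k ≤ j := Nat.le_of_dvd hj.1 hkj
          exact ⟨⟨hkpos, by omega⟩, hkj⟩
    _ = ∑ j ∈ Finset.Ioc 0 m, (if j = 1 then (1 : ℤ) else 0) := by
        refine Finset.sum_congr rfl fun j hj => ?_
        rw [← coe_mul_zeta_apply, moebius_mul_coe_zeta, one_apply]
    _ = 1 := by
        rw [Finset.sum_ite_eq' (Finset.Ioc 0 m) 1 (fun _ => (1 : ℤ))]
        simp [h1]

theorem stmt_12 : ∀ n : ℕ, 0 < n → ∀ x : ℝ, 2 ≤ x → x < n → fn n x = -1 := by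
  intro n hn x hx2 hxn
  have hx0 : (0 : ℝ) ≤ x := by linarith
  set m : ℕ := ⌊x⌋₊ with hm
  have hm2 : 2 ≤ m := Nat.le_floor hx2
  have hmn : m ≤ n := by
    have : (m : ℝ) ≤ x := Nat.floor_le hx0
    have : (m : ℝ) < n := lt_of_le_of_lt this hxn
    exact_mod_cast this.le
  have hnu : ∀ k ∈ Finset.Icc 1 n, nu (x / k)
      = ((m / k : ℕ) : ℝ) - 2 * ((m / 2 / k : ℕ) : ℝ) := by
    intro k hk
    rw [Finset.mem_Icc] at hk
    have hk0 : (0 : ℝ) < k := by exact_mod_cast hk.1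
    have hxk : 0 ≤ x / k := div_nonneg hx0 hk0.le
    have h1 : ((m / k : ℕ) : ℝ) = ((⌊x / (k : ℝ)⌋ : ℤ) : ℝ) := by
      rw [← Int.natCast_floor_eq_floor hxk, ← Nat.floor_div_natCast x k]
      push_cast
      ring
    have hxk2 : 0 ≤ x / ((k * 2 : ℕ) : ℝ) := by positivity
    have h2 : ((m / 2 / k : ℕ) : ℝ) = ((⌊x / (k : ℝ) / 2⌋ : ℤ) : ℝ) := by
      have hd : x / (k : ℝ) / 2 = x / ((k * 2 : ℕ) : ℝ) := by
        push_cast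
        rw [div_div]
      rw [hd, ← Int.natCast_floor_eq_floor hxk2, Nat.floor_div_natCast x (k * 2)]
      have h3 : m / 2 / k = m / (k * 2) := by
        rw [Nat.div_div_eq_div_mul, mul_comm]
      rw [h3]
      norm_cast
    rw [nu, Int.fract, Int.fract, h1, h2]
    ring
  have key1 := key_moebius_div n m (by omega) hmn
  have key2 := key_moebius_div n (m / 2) (by omega) (by omega)
  have keyR1 : ∑ k ∈ Finset.Icc 1 n, ((moebius k : ℤ) : ℝ) * ((m / k : ℕ) : ℝ) = 1 := by
    have h := congrArg (fun z : ℤ => (z : ℝ)) key1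
    push_cast at h
    exact h
  have keyR2 : ∑ k ∈ Finset.Icc 1 n, ((moebius k : ℤ) : ℝ) * ((m / 2 / k : ℕ) : ℝ) = 1 := by
    have h := congrArg (fun z : ℤ => (z : ℝ)) key2
    push_cast at h
    exact h
  calc fn n x = ∑ k ∈ Finset.Icc 1 n,
      (((moebius k : ℤ) : ℝ) * ((m / k : ℕ) : ℝ) - 2 * (((moebius k : ℤ) : ℝ) * ((m / 2 / k : ℕ) : ℝ))) := by
        rw [fn]
        refine Finset.sum_congr rfl fun k hk => ?_
        rw [hnu k hk]
        ring
    _ = -1 := by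
        rw [Finset.sum_sub_distrib, ← Finset.mul_sum, keyR1, keyR2]
        norm_num
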